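/- arXiv:1805.12166 — 3 statements merged into one kernel-verified Lean document; each statement's English description precedes it below -/
import Mathlib

section
/- Let H be a positive semidefinite operator on a finite-dimensional Hilbert space A with smallest eigenvalue 0 and second smallest eigenvalue Δ > 0. If |ψ⟩ is a unit vector on A ⊗ R satisfying ⟨ψ| (H ⊗ I_R) |ψ⟩ ≤ ε, then there exists a unit vector |θ⟩ on A ⊗ R with (H ⊗ I_R)|θ⟩ = 0 and ‖ |ψ⟩⟨ψ| − |θ⟩⟨θ| ‖₁ ≤ 4√(ε/Δ). -/
open Kronecker ComplexOrder Matrix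

/-- Trace norm of a complex matrix: trace of the positive square root of `Mᴴ * M`. -/
noncomputable def traceNorm {n : Type*} [Fintype n] [DecidableEq n] (M : Matrix n n ℂ) : ℝ :=
  (((Matrix.posSemidef_conjTranspose_mul_self M).1.eigenvectorUnitary.1 *
      diagonal (((↑) : ℝ → ℂ) ∘ (√·) ∘ (Matrix.posSemidef_conjTranspose_mul_self M).1.eigenvalues) *
      (star (Matrix.posSemidef_conjTranspose_mul_self M).1.eigenvectorUnitary : Matrix n n ℂ)).trace).re

/-- Rank-one projector `|ψ⟩⟨ψ|`. -/
noncomputable def outer {n : Type*} [Fintype n] (ψ : n → ℂ) : Matrix n n ℂ :=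
  Matrix.vecMulVec ψ (star ψ)

namespace StmtAux

variable {n : Type*} [Fintype n] [DecidableEq n]

lemma mulmul_key (U : Matrix n n ℂ) (hU : star U * U = 1) (f g : n → ℂ) :
    (U * diagonal f * star U) * (U * diagonal g * star U)
      = U * diagonal (fun i => f i * g i) * star U := by
  have : diagonal f * (star U * U) * diagonal g = diagonal (fun i => f i * g i) := by
    rw [hU, Matrix.mul_one, diagonal_mul_diagonal]
  calc (U * diagonal f * star U) * (U * diagonal g * star U)
      = U * (diagonal f * (star U * U) * diagonal g) * star U := by
        simp only [Matrix.mul_assoc]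
    _ = U * diagonal (fun i => f i * g i) * star U := by rw [this]

lemma trace_conj (U : Matrix n n ℂ) (hU : star U * U = 1) (f : n → ℂ) :
    (U * diagonal f * star U).trace = ∑ i, f i := by
  rw [trace_mul_cycle, hU, Matrix.one_mul, trace_diagonal]

lemma outer_isHermitian (ψ : n → ℂ) : (outer ψ).IsHermitian := by
  ext i j
  simp only [outer, conjTranspose_apply, vecMulVec_apply, Pi.star_apply, star_mul', star_star]
  ring

lemma rank_vecMulVec_le (u v : n → ℂ) : (vecMulVec u v).rank ≤ 1 := by
  rw [vecMulVec_eq Unit]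
  exact (rank_mul_le_left _ _).trans ((rank_le_card_width _).trans (by simp))

lemma rank_add_le' (A B : Matrix n n ℂ) : (A + B).rank ≤ A.rank + B.rank := by
  have hle : LinearMap.range (A + B).mulVecLin ≤
      LinearMap.range A.mulVecLin ⊔ LinearMap.range B.mulVecLin := by
    rintro _ ⟨x, rfl⟩
    rw [mulVecLin_add]
    exact Submodule.add_mem_sup ⟨x, rfl⟩ ⟨x, rfl⟩
  exact (Submodule.finrank_mono hle).trans
    (Submodule.finrank_add_le_finrank_add_finrank _ _)

lemma trace_outer_mul_outer (u v : n → ℂ) :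
    (outer u * outer v).trace = (star u ⬝ᵥ v) * (star v ⬝ᵥ u) := by
  simp only [outer, Matrix.trace, Matrix.diag_apply, Matrix.mul_apply, vecMulVec_apply,
    Pi.star_apply, dotProduct, Finset.sum_mul, Finset.mul_sum]
  congr 1; ext k; congr 1; ext i; ring

/-- For a Hermitian matrix, the trace norm is the sum of absolute values of eigenvalues. -/
lemma traceNorm_hermitian {M : Matrix n n ℂ} (hM : M.IsHermitian) :
    traceNorm M = ∑ i, |hM.eigenvalues i| := by
  have hN := (Matrix.posSemidef_conjTranspose_mul_self M).1
  have h1 : traceNorm M = (cfc Real.sqrt (Mᴴ * M)).trace.re := by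
    rw [hN.cfc_eq, IsHermitian.cfc, Unitary.conjStarAlgAut_apply]; rfl
  have h2 : cfc Real.sqrt (Mᴴ * M) = cfc (fun x : ℝ => |x|) M := by
    have hsa : IsSelfAdjoint M := hM
    rw [hM.eq, ← pow_two, ← cfc_pow_id (R := ℝ) M 2 hsa,
      ← cfc_comp Real.sqrt (fun x : ℝ => x ^ 2) M hsa]
    congr 1; funext x; exact Real.sqrt_sq_eq_abs x
  have hU : star (hM.eigenvectorUnitary : Matrix n n ℂ) * hM.eigenvectorUnitary = 1 :=
    mem_unitaryGroup_iff'.mp hM.eigenvectorUnitary.2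
  rw [h1, h2, hM.cfc_eq, IsHermitian.cfc, Unitary.conjStarAlgAut_apply, trace_conj _ hU]
  simp only [Function.comp_def, Complex.re_sum]
  rfl

lemma trace_sq_hermitian {M : Matrix n n ℂ} (hM : M.IsHermitian) :
    (M * M).trace = ((∑ i, hM.eigenvalues i ^ 2 : ℝ) : ℂ) := by
  have hU : star (hM.eigenvectorUnitary : Matrix n n ℂ) * hM.eigenvectorUnitary = 1 :=
    mem_unitaryGroup_iff'.mp hM.eigenvectorUnitary.2
  have hspec : M = hM.eigenvectorUnitary * diagonal (fun i => (hM.eigenvalues i : ℂ)) *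
      star (hM.eigenvectorUnitary : Matrix n n ℂ) := by
    exact hM.spectral_theorem
  conv_lhs => rw [hspec, mulmul_key _ hU, trace_conj _ hU]
  push_cast
  congr 1; ext i; ring

/-- Key trace-norm bound for a difference of two rank-one projectors. -/
lemma traceNorm_outer_sub_outer_le (ψ θ : n → ℂ)
    (hψ : star ψ ⬝ᵥ ψ = 1) (hθ : star θ ⬝ᵥ θ = 1) :
    traceNorm (outer ψ - outer θ)
      ≤ 2 * Real.sqrt (1 - Complex.normSq (star ψ ⬝ᵥ θ)) := by
  set c : ℂ := star ψ ⬝ᵥ θ with hc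
  set M : Matrix n n ℂ := outer ψ - outer θ with hMdef
  have hM : M.IsHermitian := (outer_isHermitian ψ).sub (outer_isHermitian θ)
  set lam : n → ℝ := hM.eigenvalues with hlam
  -- trace of M² equals 2 - 2 |c|²
  have hconj : star θ ⬝ᵥ ψ = starRingEnd ℂ c := by
    rw [hc, starRingEnd_apply]
    exact star_dotProduct θ ψ
  have htr : (M * M).trace = ((2 - 2 * Complex.normSq c : ℝ) : ℂ) := by
    have hexp : M * M = outer ψ * outer ψ - outer ψ * outer θ - outer θ * outer ψ
        + outer θ * outer θ := by
      rw [hMdef]; noncomm_ring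
    rw [hexp, trace_add, trace_sub, trace_sub, trace_outer_mul_outer,
      trace_outer_mul_outer, trace_outer_mul_outer, trace_outer_mul_outer,
      hψ, hθ, ← hc, hconj]
    have h1 : (starRingEnd ℂ) c * c = (Complex.normSq c : ℂ) := by
      rw [mul_comm, Complex.mul_conj]
    have h2 : c * (starRingEnd ℂ) c = (Complex.normSq c : ℂ) := Complex.mul_conj c
    simp only [h1, h2]
    push_cast
    ring
  have hsumsq : ∑ i, lam i ^ 2 = 2 - 2 * Complex.normSq c := by
    have := trace_sq_hermitian hM
    rw [htr] at this
    exact_mod_cast (Complex.ofReal_inj.mp this.symm)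
  -- the number of nonzero eigenvalues is at most 2
  have hrank : M.rank ≤ 2 := by
    have h1 : M = vecMulVec ψ (star ψ) + vecMulVec (-θ) (star θ) := by
      rw [hMdef]
      ext i j
      simp [outer, vecMulVec_apply, sub_eq_add_neg]
    calc M.rank ≤ (vecMulVec ψ (star ψ)).rank + (vecMulVec (-θ) (star θ)).rank := by
          rw [h1]; exact rank_add_le' _ _
      _ ≤ 1 + 1 := add_le_add (rank_vecMulVec_le _ _) (rank_vecMulVec_le _ _)
      _ = 2 := rfl
  set s : Finset n := Finset.univ.filter (fun i => lam i ≠ 0) with hs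
  have hcard : s.card ≤ 2 := by
    have := hM.rank_eq_card_non_zero_eigs
    rw [Fintype.card_subtype] at this
    rw [hs, ← this]
    exact hrank
  -- Cauchy–Schwarz
  have hsum_eq : ∑ i, |lam i| = ∑ i ∈ s, |lam i| := by
    rw [hs]
    exact (Finset.sum_filter_of_ne (by intro x _ h hx; exact h (by simpa using hx))).symm
  have hCS : (∑ i ∈ s, |lam i|) ^ 2 ≤ 2 * (2 - 2 * Complex.normSq c) := by
    calc (∑ i ∈ s, |lam i|) ^ 2 = (∑ i ∈ s, 1 * |lam i|) ^ 2 := by simp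
      _ ≤ (∑ i ∈ s, (1:ℝ) ^ 2) * ∑ i ∈ s, |lam i| ^ 2 :=
          Finset.sum_mul_sq_le_sq_mul_sq s _ _
      _ ≤ 2 * (2 - 2 * Complex.normSq c) := by
          rw [← hsumsq]
          refine mul_le_mul ?_ ?_ (Finset.sum_nonneg fun i _ => sq_nonneg _) (by norm_num)
          · simpa using (Nat.cast_le.mpr hcard : (s.card : ℝ) ≤ 2)
          · refine Finset.sum_le_univ_sum_of_nonneg (fun i => sq_nonneg _) |>.trans_eq ?_
            congr 1; ext i; rw [sq_abs]
  have hnonneg : 0 ≤ ∑ i ∈ s, |lam i| := Finset.sum_nonneg fun i _ => abs_nonneg _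
  have hle : ∑ i ∈ s, |lam i| ≤ Real.sqrt (2 * (2 - 2 * Complex.normSq c)) := by
    rw [Real.le_sqrt hnonneg (le_trans (sq_nonneg _) hCS)]
    exact hCS
  rw [traceNorm_hermitian hM, hsum_eq]
  refine hle.trans ?_
  have h4 : 2 * (2 - 2 * Complex.normSq c) = 4 * (1 - Complex.normSq c) := by ring
  rw [h4, Real.sqrt_mul (by norm_num : (0:ℝ) ≤ 4),
    show Real.sqrt 4 = 2 by
      rw [show (4:ℝ) = 2 ^ 2 by norm_num, Real.sqrt_sq (by norm_num : (0:ℝ) ≤ 2)]]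

section Kron

variable {a r : ℕ}

lemma kron_one_mulVec (A : Matrix (Fin a) (Fin a) ℂ) (x : Fin a × Fin r → ℂ)
    (i : Fin a) (j : Fin r) :
    ((A ⊗ₖ (1 : Matrix (Fin r) (Fin r) ℂ)) *ᵥ x) (i, j) = (A *ᵥ fun k => x (k, j)) i := by
  simp only [Matrix.mulVec, dotProduct, Fintype.sum_prod_type, kroneckerMap_apply, one_apply,
    mul_ite, mul_one, mul_zero, ite_mul, zero_mul]
  simp [Finset.sum_ite_eq, Finset.sum_ite_eq']

lemma kron_one_dot (A : Matrix (Fin a) (Fin a) ℂ) (x : Fin a × Fin r → ℂ) :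
    star x ⬝ᵥ (A ⊗ₖ (1 : Matrix (Fin r) (Fin r) ℂ)) *ᵥ x
      = ∑ j : Fin r, star (fun k => x (k, j)) ⬝ᵥ A *ᵥ (fun k => x (k, j)) := by
  simp only [dotProduct, Fintype.sum_prod_type, Pi.star_apply]
  rw [Finset.sum_comm]
  exact Finset.sum_congr rfl fun j _ => Finset.sum_congr rfl fun i _ => by
    rw [kron_one_mulVec]

lemma kron_one_posSemidef {A : Matrix (Fin a) (Fin a) ℂ} (hA : A.PosSemidef) :
    (A ⊗ₖ (1 : Matrix (Fin r) (Fin r) ℂ)).PosSemidef := by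
  refine PosSemidef.of_dotProduct_mulVec_nonneg ?_ ?_
  · ext ⟨i, j⟩ ⟨k, l⟩
    simp only [conjTranspose_apply, kroneckerMap_apply, one_apply, star_mul']
    have hA1 : star (A k i) = A i k := by
      conv_rhs => rw [← hA.1]
      rw [conjTranspose_apply]
    by_cases h : j = l
    · subst h; simp [hA1]
    · have h' : ¬ l = j := fun hh => h hh.symm
      simp [h, h']
  · intro x
    rw [kron_one_dot]
    exact Finset.sum_nonneg fun j _ => hA.dotProduct_mulVec_nonneg _

lemma sub_kron (A B : Matrix (Fin a) (Fin a) ℂ) (C : Matrix (Fin r) (Fin r) ℂ) :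
    (A - B) ⊗ₖ C = A ⊗ₖ C - B ⊗ₖ C := by
  ext ⟨i, j⟩ ⟨k, l⟩
  simp [kroneckerMap_apply, sub_mul]

end Kron

end StmtAux

/-- If `H` is PSD with smallest eigenvalue `0` and second smallest eigenvalue at least `Δ > 0`,
and `|ψ⟩` is a unit vector on `A ⊗ R` with `⟨ψ|(H ⊗ I)|ψ⟩ ≤ ε`, then there is a unit vector
`|θ⟩` with `(H ⊗ I)|θ⟩ = 0` and `‖ |ψ⟩⟨ψ| − |θ⟩⟨θ| ‖₁ ≤ 4√(ε/Δ)`. -/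
theorem stmt0 {a r : ℕ} (H : Matrix (Fin a) (Fin a) ℂ) (hH : H.PosSemidef)
    (Δ ε : ℝ) (hΔ : 0 < Δ) (hε : 0 ≤ ε)
    (hker : ∃ v : Fin a → ℂ, v ≠ 0 ∧ H.mulVec v = 0)
    (hgap : ∀ i, hH.1.eigenvalues i = 0 ∨ Δ ≤ hH.1.eigenvalues i)
    (ψ : Fin a × Fin r → ℂ) (hψ : star ψ ⬝ᵥ ψ = 1)
    (hlow : (star ψ ⬝ᵥ (H ⊗ₖ (1 : Matrix (Fin r) (Fin r) ℂ)).mulVec ψ).re ≤ ε) :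
    ∃ θ : Fin a × Fin r → ℂ, star θ ⬝ᵥ θ = 1 ∧
      (H ⊗ₖ (1 : Matrix (Fin r) (Fin r) ℂ)).mulVec θ = 0 ∧
      traceNorm (outer ψ - outer θ) ≤ 4 * Real.sqrt (ε / Δ) := by
  classical
  obtain ⟨v, hv0, hv⟩ := hker
  set U : Matrix (Fin a) (Fin a) ℂ := (hH.1.eigenvectorUnitary : Matrix (Fin a) (Fin a) ℂ)
    with hUdef
  have hU : star U * U = 1 := mem_unitaryGroup_iff'.mp hH.1.eigenvectorUnitary.2
  have hU' : U * star U = 1 := mem_unitaryGroup_iff.mp hH.1.eigenvectorUnitary.2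
  set d : Fin a → ℂ := fun i => (hH.1.eigenvalues i : ℂ) with hd
  set χ : Fin a → ℂ := fun i => if hH.1.eigenvalues i = 0 then 1 else 0 with hχ
  have hspecH : H = U * diagonal d * star U := by
    exact hH.1.spectral_theorem
  set P : Matrix (Fin a) (Fin a) ℂ := U * diagonal χ * star U with hPdef
  have hPpsd : P.PosSemidef := by
    rw [hPdef, Matrix.star_eq_conjTranspose]
    refine PosSemidef.mul_mul_conjTranspose_same (posSemidef_diagonal_iff.mpr fun i => ?_) U
    by_cases h : hH.1.eigenvalues i = 0 <;> simp [hχ, h]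
  have hHP : H * P = 0 := by
    rw [hspecH, hPdef, StmtAux.mulmul_key U hU]
    have hz : (fun i => d i * χ i) = fun _ => 0 := by
      funext i; by_cases h : hH.1.eigenvalues i = 0 <;> simp [hd, hχ, h]
    rw [hz, diagonal_zero, Matrix.mul_zero, Matrix.zero_mul]
  have hPP : P * P = P := by
    rw [hPdef, StmtAux.mulmul_key U hU]
    have hz : (fun i => χ i * χ i) = χ := by
      funext i; by_cases h : hH.1.eigenvalues i = 0 <;> simp [hχ, h]
    rw [hz]
  have hdiag : diagonal (fun i => d i - (Δ:ℂ) * (1 - χ i))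
      = diagonal d - (Δ:ℂ) • ((1 : Matrix (Fin a) (Fin a) ℂ) - diagonal χ) := by
    ext i j
    by_cases h : i = j
    · subst h; simp
    · simp [diagonal_apply_ne _ h, Matrix.one_apply_ne h]
  have hG2 : U * diagonal (fun i => d i - (Δ:ℂ) * (1 - χ i)) * star U
      = H - (Δ:ℂ) • (1 - P) := by
    rw [hdiag]
    simp only [Matrix.mul_sub, Matrix.sub_mul, mul_smul_comm, smul_mul_assoc,
      Matrix.mul_one, hU']
    rw [← hspecH, ← hPdef]
  have hGpsd : (H - (Δ:ℂ) • (1 - P)).PosSemidef := by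
    rw [← hG2, Matrix.star_eq_conjTranspose]
    refine PosSemidef.mul_mul_conjTranspose_same (posSemidef_diagonal_iff.mpr fun i => ?_) U
    rcases hgap i with h | h
    · simp [hd, hχ, h]
    · have hne : hH.1.eigenvalues i ≠ 0 := ne_of_gt (lt_of_lt_of_le hΔ h)
      have heq : d i - (Δ:ℂ) * (1 - χ i) = ((hH.1.eigenvalues i - Δ : ℝ) : ℂ) := by
        simp only [hd, hχ, if_neg hne]
        push_cast
        ring
      rw [heq]
      exact Complex.zero_le_real.mpr (by linarith)
  set Q : Matrix (Fin a × Fin r) (Fin a × Fin r) ℂ := P ⊗ₖ (1 : Matrix (Fin r) (Fin r) ℂ)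
    with hQdef
  have hQpsd : Q.PosSemidef := StmtAux.kron_one_posSemidef hPpsd
  have hQQ : Q * Q = Q := by
    rw [hQdef, ← mul_kronecker_mul, hPP, Matrix.one_mul]
  set φ : Fin a × Fin r → ℂ := Q *ᵥ ψ with hφdef
  have hφnorm : star φ ⬝ᵥ φ = star ψ ⬝ᵥ Q *ᵥ ψ := by
    rw [hφdef, star_mulVec, ← dotProduct_mulVec, hQpsd.1, mulVec_mulVec, hQQ]
  have hQreal : star ψ ⬝ᵥ Q *ᵥ ψ = (((star ψ ⬝ᵥ Q *ᵥ ψ).re : ℝ) : ℂ) := by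
    have hstar : star (star φ ⬝ᵥ φ) = star φ ⬝ᵥ φ := (star_dotProduct φ φ).symm
    rw [← hφnorm]
    exact ((Complex.conj_eq_iff_re).mp hstar).symm
  set c2 : ℝ := (star ψ ⬝ᵥ Q *ᵥ ψ).re with hc2def
  have hgapineq : Δ * (1 - c2) ≤ ε := by
    have h0 : 0 ≤ star ψ ⬝ᵥ ((H - (Δ:ℂ) • (1 - P)) ⊗ₖ (1 : Matrix (Fin r) (Fin r) ℂ)) *ᵥ ψ :=
      (StmtAux.kron_one_posSemidef hGpsd).dotProduct_mulVec_nonneg ψ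
    have hexp : ((H - (Δ:ℂ) • (1 - P)) ⊗ₖ (1 : Matrix (Fin r) (Fin r) ℂ))
        = H ⊗ₖ (1 : Matrix (Fin r) (Fin r) ℂ)
          - (Δ:ℂ) • ((1 : Matrix (Fin a × Fin r) (Fin a × Fin r) ℂ) - Q) := by
      rw [StmtAux.sub_kron, smul_kronecker, StmtAux.sub_kron, one_kronecker_one, hQdef]
    rw [hexp, Matrix.sub_mulVec, dotProduct_sub, Matrix.smul_mulVec, dotProduct_smul,
      Matrix.sub_mulVec, dotProduct_sub, Matrix.one_mulVec, hψ] at h0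
    have h0re := (Complex.le_def.mp h0).1
    simp only [Complex.zero_re, Complex.sub_re, smul_eq_mul, Complex.re_ofReal_mul,
      Complex.one_re, ← hc2def] at h0re
    linarith [hlow]
  by_cases hc2pos : 0 < c2
  · -- main case: normalize the projection of ψ onto the kernel
    set cR : ℝ := Real.sqrt c2 with hcRdef
    have hcRpos : 0 < cR := Real.sqrt_pos.mpr hc2pos
    have hcR2 : cR * cR = c2 := Real.mul_self_sqrt hc2pos.le
    have hφφ : star φ ⬝ᵥ φ = ((c2 : ℝ) : ℂ) := by rw [hφnorm, hQreal]
    have hψφ : star ψ ⬝ᵥ φ = ((c2 : ℝ) : ℂ) := by rw [hφdef, hQreal]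
    have hunit : star (((cR:ℂ))⁻¹ • φ) ⬝ᵥ (((cR:ℂ))⁻¹ • φ) = 1 := by
      rw [star_smul, smul_dotProduct, dotProduct_smul, hφφ, star_inv₀, Complex.star_def,
        Complex.conj_ofReal, smul_eq_mul, smul_eq_mul]
      rw [← hcR2]
      push_cast
      field_simp
    refine ⟨((cR:ℂ))⁻¹ • φ, hunit, ?_, ?_⟩
    · rw [Matrix.mulVec_smul, hφdef, Matrix.mulVec_mulVec, hQdef, ← mul_kronecker_mul, hHP,
        one_mul, zero_kronecker, Matrix.zero_mulVec, smul_zero]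
    · have hip : star ψ ⬝ᵥ (((cR:ℂ))⁻¹ • φ) = ((cR : ℝ) : ℂ) := by
        rw [dotProduct_smul, hψφ, smul_eq_mul, ← hcR2]
        push_cast
        field_simp
      have hb := StmtAux.traceNorm_outer_sub_outer_le ψ (((cR:ℂ))⁻¹ • φ) hψ hunit
      rw [hip] at hb
      have hnsq : Complex.normSq ((cR : ℝ) : ℂ) = c2 := by
        rw [Complex.normSq_ofReal, hcR2]
      rw [hnsq] at hb
      have hle : 1 - c2 ≤ ε / Δ := by
        rw [le_div_iff₀ hΔ]
        linarith [hgapineq]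
      have hs := Real.sqrt_le_sqrt hle
      have hs0 := Real.sqrt_nonneg (ε / Δ)
      linarith [hb]
  · push_neg at hc2pos
    have hεΔ : 1 ≤ ε / Δ := by
      rw [le_div_iff₀ hΔ]
      nlinarith [hgapineq]
    have hr : 0 < r := by
      rcases Nat.eq_zero_or_pos r with h0 | h0
      · subst h0
        simp [dotProduct, Fintype.sum_prod_type] at hψ
      · exact h0
    set j0 : Fin r := ⟨0, hr⟩ with hj0
    set w : Fin a × Fin r → ℂ := fun p => if p.2 = j0 then v p.1 else 0 with hwdef
    have hww : star w ⬝ᵥ w = star v ⬝ᵥ v := by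
      simp only [dotProduct, Fintype.sum_prod_type, Pi.star_apply, hwdef, apply_ite,
        star_zero, ite_mul, mul_ite, zero_mul, mul_zero]
      simp [Finset.sum_ite_eq']
    have hvv : star v ⬝ᵥ v = ((∑ i, Complex.normSq (v i) : ℝ) : ℂ) := by
      push_cast
      simp only [dotProduct, Pi.star_apply]
      refine Finset.sum_congr rfl fun i _ => ?_
      rw [Complex.star_def, mul_comm, Complex.mul_conj]
    have hspos : 0 < ∑ i, Complex.normSq (v i) := by
      obtain ⟨i, hi⟩ := Function.ne_iff.mp hv0
      exact Finset.sum_pos' (fun j _ => Complex.normSq_nonneg _)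
        ⟨i, Finset.mem_univ i, Complex.normSq_pos.mpr hi⟩
    set sR : ℝ := Real.sqrt (∑ i, Complex.normSq (v i)) with hsRdef
    have hsRpos : 0 < sR := Real.sqrt_pos.mpr hspos
    have hs2 : sR * sR = ∑ i, Complex.normSq (v i) := Real.mul_self_sqrt hspos.le
    have hunit : star (((sR:ℂ))⁻¹ • w) ⬝ᵥ (((sR:ℂ))⁻¹ • w) = 1 := by
      rw [star_smul, smul_dotProduct, dotProduct_smul, hww, hvv, star_inv₀, Complex.star_def,
        Complex.conj_ofReal, smul_eq_mul, smul_eq_mul]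
      rw [← hs2]
      push_cast
      field_simp
    refine ⟨((sR:ℂ))⁻¹ • w, hunit, ?_, ?_⟩
    · rw [Matrix.mulVec_smul]
      have hw0 : (H ⊗ₖ (1 : Matrix (Fin r) (Fin r) ℂ)) *ᵥ w = 0 := by
        funext p
        obtain ⟨i, j⟩ := p
        rw [StmtAux.kron_one_mulVec]
        by_cases h : j = j0
        · have hcol : (fun k => w (k, j)) = v := by funext k; simp [hwdef, h]
          rw [hcol, hv]
          rfl
        · have hcol : (fun k => w (k, j)) = (0 : Fin a → ℂ) := by funext k; simp [hwdef, h]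
          rw [hcol, Matrix.mulVec_zero]
          rfl
      rw [hw0, smul_zero]
    · have hb := StmtAux.traceNorm_outer_sub_outer_le ψ (((sR:ℂ))⁻¹ • w) hψ hunit
      refine hb.trans ?_
      have h1 : Real.sqrt (1 - Complex.normSq (star ψ ⬝ᵥ (((sR:ℂ))⁻¹ • w))) ≤ 1 := by
        rw [show (1:ℝ) = Real.sqrt 1 from (Real.sqrt_one).symm]
        apply Real.sqrt_le_sqrt
        have := Complex.normSq_nonneg (star ψ ⬝ᵥ (((sR:ℂ))⁻¹ • w))
        rw [Real.sqrt_one]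
        linarith
      have h2 : (1:ℝ) ≤ Real.sqrt (ε / Δ) := Real.one_le_sqrt.mpr hεΔ
      linarith
end

section
/- Let |Φ⟩ be the maximally entangled state on S qubits between registers A and B (all Schmidt coefficients equal to 2^{−S/2}), |ψ'⟩ an arbitrary pure state on A'B'R, and |θ⟩ a pure state on AA'BB'R with Schmidt rank at most r across the cut AA' versus BB'R. Then |⟨Φ|_{AB} ⊗ ⟨ψ'|_{A'B'R} · |θ⟩|² ≤ r · 2^{−S}. -/
open Matrix

section helpers

lemma sum_prod_factor {ι κ : Type*} [Fintype ι] [Fintype κ] (f : ι → ℂ) (g : κ → ℂ) :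
    ∑ p : ι × κ, f p.1 * g p.2 = (∑ i, f i) * (∑ k, g k) := by
  rw [Fintype.sum_prod_type, Finset.sum_mul_sum]

lemma norm_one_of_dot {ι : Type*} [Fintype ι] (x : ι → ℂ) (h : star x ⬝ᵥ x = 1) :
    ∑ i, ‖x i‖ ^ 2 = 1 := by
  have h' : (↑(∑ i, ‖x i‖ ^ 2) : ℂ) = 1 := by
    rw [← h]
    simp only [dotProduct, Pi.star_apply, Complex.star_def]
    push_cast
    refine Finset.sum_congr rfl fun i _ => ?_
    rw [← Complex.normSq_eq_conj_mul_self, ← Complex.sq_norm]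
    push_cast; ring
  exact_mod_cast h'

lemma conj_mul_self' (z : ℂ) : (starRingEnd ℂ) z * z = ((‖z‖ ^ 2 : ℝ) : ℂ) := by
  rw [← Complex.normSq_eq_conj_mul_self, ← Complex.sq_norm]

lemma ortho_decomp {r : ℕ} [NeZero r] {ι : Type*} [Fintype ι] (u : Fin r → ι → ℂ) :
    ∃ e : Fin r → ι → ℂ,
      (∀ j k, j ≠ k → ∑ p, (starRingEnd ℂ) (e j p) * e k p = 0) ∧
      (∀ i, ∃ a : Fin r → ℂ, ∀ p, u i p = ∑ j, a j * e j p) := by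
  let U : Fin r → EuclideanSpace ℂ ι := fun i => WithLp.toLp 2 (u i)
  haveI : WellFoundedLT (Fin r) := inferInstance
  let e : Fin r → EuclideanSpace ℂ ι := InnerProductSpace.gramSchmidt ℂ U
  refine ⟨fun j p => e j p, ?_, ?_⟩
  · intro j k hjk
    have := InnerProductSpace.gramSchmidt_orthogonal ℂ U hjk
    simpa [PiLp.inner_apply, RCLike.inner_apply, e, mul_comm] using this
  · intro i
    have hmem : U i ∈ Submodule.span ℂ (Set.range (InnerProductSpace.gramSchmidt ℂ U)) := by
      rw [InnerProductSpace.span_gramSchmidt]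
      exact Submodule.subset_span (Set.mem_range_self i)
    obtain ⟨a, ha⟩ := (Submodule.mem_span_range_iff_exists_fun ℂ).mp hmem
    refine ⟨a, fun p => ?_⟩
    have h2 : (∑ x : Fin r, a x • e x) p = ∑ x : Fin r, (a x • e x) p := by
      simp
    have := congrArg (fun z : EuclideanSpace ℂ ι => z p) ha
    rw [h2] at this
    simpa [e, U, smul_eq_mul] using this.symm

end helpers


lemma cs_abs {ι : Type*} [Fintype ι] (x y : ι → ℂ) :
    ‖∑ i, (starRingEnd ℂ) (x i) * y i‖ ^ 2 ≤
      (∑ i, ‖x i‖ ^ 2) * (∑ i, ‖y i‖ ^ 2) := by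
  let X : EuclideanSpace ℂ ι := WithLp.toLp 2 x
  let Y : EuclideanSpace ℂ ι := WithLp.toLp 2 y
  have h1 : inner ℂ X Y = ∑ i, (starRingEnd ℂ) (x i) * y i := by
    simp [PiLp.inner_apply, X, Y, RCLike.inner_apply, mul_comm]
  have h2 := norm_inner_le_norm (𝕜 := ℂ) X Y
  have hX : ‖X‖ ^ 2 = ∑ i, ‖x i‖ ^ 2 := by
    rw [EuclideanSpace.norm_eq, Real.sq_sqrt (by positivity)]
  have hY : ‖Y‖ ^ 2 = ∑ i, ‖y i‖ ^ 2 := by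
    rw [EuclideanSpace.norm_eq, Real.sq_sqrt (by positivity)]
  calc ‖∑ i, (starRingEnd ℂ) (x i) * y i‖ ^ 2
      = ‖inner ℂ X Y‖ ^ 2 := by rw [h1]
    _ ≤ (‖X‖ * ‖Y‖) ^ 2 := by
        apply pow_le_pow_left₀ (norm_nonneg _) h2
    _ = (∑ i, ‖x i‖ ^ 2) * (∑ i, ‖y i‖ ^ 2) := by
        rw [mul_pow, hX, hY]

lemma step2 {S a' b' rr : ℕ}
    (ψ' : Fin a' × Fin b' × Fin rr → ℂ) (hψ : ∑ i, ‖ψ' i‖ ^ 2 = 1)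
    (e : Fin (2 ^ S) × Fin a' → ℂ) (w : Fin (2 ^ S) × Fin b' × Fin rr → ℂ) :
    ‖∑ p : (Fin (2 ^ S) × Fin a') × (Fin (2 ^ S) × Fin b' × Fin rr),
        (starRingEnd ℂ) ((if p.1.1 = p.2.1 then ((Real.sqrt (2 ^ S))⁻¹ : ℂ) else 0)
          * ψ' (p.1.2, p.2.2)) * (e p.1 * w p.2)‖ ^ 2
      ≤ (∑ p1, ‖e p1‖ ^ 2) * (∑ q, ‖w q‖ ^ 2) / 2 ^ S := by
  set c : ℝ := (Real.sqrt (2 ^ S))⁻¹ with hc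
  have hc0 : 0 ≤ c := by positivity
  have hc2 : c ^ 2 = (2 ^ S : ℝ)⁻¹ := by
    rw [hc, ← Real.sqrt_inv, Real.sq_sqrt (by positivity)]
  set g : Fin (2 ^ S) × Fin b' × Fin rr → ℂ :=
    fun q => ∑ α, ψ' (α, q.2) * (starRingEnd ℂ) (e (q.1, α)) with hg
  have key : (∑ p : (Fin (2 ^ S) × Fin a') × (Fin (2 ^ S) × Fin b' × Fin rr),
        (starRingEnd ℂ) ((if p.1.1 = p.2.1 then ((Real.sqrt (2 ^ S))⁻¹ : ℂ) else 0)
          * ψ' (p.1.2, p.2.2)) * (e p.1 * w p.2))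
      = (c : ℂ) * ∑ q, (starRingEnd ℂ) (g q) * w q := by
    rw [Fintype.sum_prod_type, Finset.sum_comm, Finset.mul_sum]
    refine Finset.sum_congr rfl fun q _ => ?_
    rw [Fintype.sum_prod_type]
    have hterm : ∀ (x : Fin (2 ^ S)) (α : Fin a'),
        (starRingEnd ℂ) ((if x = q.1 then ((Real.sqrt (2 ^ S))⁻¹ : ℂ) else 0) * ψ' (α, q.2))
            * (e (x, α) * w q)
          = if x = q.1 then (c : ℂ) * ((starRingEnd ℂ) (ψ' (α, q.2)) * e (x, α) * w q)
            else 0 := by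
      intro x α
      split_ifs with h
      · rw [_root_.map_mul, map_inv₀, Complex.conj_ofReal]
        push_cast [hc]
        ring
      · simp
    simp_rw [hterm]
    rw [Finset.sum_comm]
    simp only [Finset.sum_ite_eq', Finset.mem_univ, if_true]
    have hcg : (starRingEnd ℂ) (g q)
        = ∑ α, (starRingEnd ℂ) (ψ' (α, q.2)) * e (q.1, α) := by
      rw [hg, map_sum]
      exact Finset.sum_congr rfl fun α _ => by rw [_root_.map_mul, Complex.conj_conj]
    rw [hcg, Finset.sum_mul, Finset.mul_sum]
  rw [key]
  have habs : ‖(c : ℂ) * ∑ q, (starRingEnd ℂ) (g q) * w q‖ ^ 2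
      = c ^ 2 * ‖∑ q, (starRingEnd ℂ) (g q) * w q‖ ^ 2 := by
    rw [norm_mul, mul_pow, Complex.norm_real, Real.norm_of_nonneg hc0]
  rw [habs]
  have h1 : ‖∑ q, (starRingEnd ℂ) (g q) * w q‖ ^ 2
      ≤ (∑ q, ‖g q‖ ^ 2) * (∑ q, ‖w q‖ ^ 2) := cs_abs g w
  have h2 : ∑ q, ‖g q‖ ^ 2 ≤ ∑ p1, ‖e p1‖ ^ 2 := by
    have hb : ∀ q : Fin (2 ^ S) × Fin b' × Fin rr, ‖g q‖ ^ 2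
        ≤ (∑ α, ‖ψ' (α, q.2)‖ ^ 2) * (∑ α, ‖e (q.1, α)‖ ^ 2) := by
      intro q
      have : ‖g q‖ = ‖(starRingEnd ℂ) (g q)‖ := (Complex.norm_conj _).symm
      rw [this]
      have hcg : (starRingEnd ℂ) (g q)
          = ∑ α, (starRingEnd ℂ) (ψ' (α, q.2)) * e (q.1, α) := by
        rw [hg, map_sum]
        exact Finset.sum_congr rfl fun α _ => by
          rw [_root_.map_mul, Complex.conj_conj]
      rw [hcg]
      exact cs_abs _ _
    calc ∑ q, ‖g q‖ ^ 2
        ≤ ∑ q : Fin (2 ^ S) × Fin b' × Fin rr,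
            (∑ α, ‖ψ' (α, q.2)‖ ^ 2) * (∑ α, ‖e (q.1, α)‖ ^ 2) :=
          Finset.sum_le_sum fun q _ => hb q
      _ = (∑ β : Fin b' × Fin rr, ∑ α, ‖ψ' (α, β)‖ ^ 2)
            * (∑ y, ∑ α, ‖e (y, α)‖ ^ 2) := by
          rw [Fintype.sum_prod_type, Finset.sum_mul_sum]
          exact Finset.sum_comm
      _ = ∑ p1, ‖e p1‖ ^ 2 := by
          have h5 : (∑ β : Fin b' × Fin rr, ∑ α, ‖ψ' (α, β)‖ ^ 2) = 1 := by
            have h6 := hψ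
            rw [Fintype.sum_prod_type] at h6
            rw [Finset.sum_comm]
            exact h6
          rw [h5, one_mul, Fintype.sum_prod_type]
  have hw0 : 0 ≤ ∑ q, ‖w q‖ ^ 2 := Finset.sum_nonneg fun q _ => by positivity
  calc c ^ 2 * ‖∑ q, (starRingEnd ℂ) (g q) * w q‖ ^ 2
      ≤ c ^ 2 * ((∑ p1, ‖e p1‖ ^ 2) * (∑ q, ‖w q‖ ^ 2)) := by
        apply mul_le_mul_of_nonneg_left _ (by positivity)
        exact h1.trans (mul_le_mul_of_nonneg_right h2 hw0)
    _ = (∑ p1, ‖e p1‖ ^ 2) * (∑ q, ‖w q‖ ^ 2) / 2 ^ S := by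
        rw [hc2]; ring

set_option maxHeartbeats 1000000

/-- Let `|Φ⟩` be the maximally entangled state on `S` qubits between registers `A` and `B`
(all Schmidt coefficients equal to `2^{-S/2}`), `|ψ'⟩` a unit vector on `A'B'R`, and `|θ⟩`
a unit vector on `AA'BB'R` of Schmidt rank at most `r` across the cut `AA'` vs `BB'R`
(i.e. `θ` is a sum of `r` product vectors across that cut).  Then
`|⟨Φ|_{AB} ⊗ ⟨ψ'|_{A'B'R} · |θ⟩|² ≤ r · 2^{-S}`. -/
theorem stmt3 {S r a' b' rr : ℕ}
    (Φ : Fin (2 ^ S) × Fin (2 ^ S) → ℂ)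
    (hΦ : Φ = fun p => if p.1 = p.2 then ((Real.sqrt (2 ^ S))⁻¹ : ℂ) else 0)
    (ψ' : Fin a' × Fin b' × Fin rr → ℂ) (hψ' : star ψ' ⬝ᵥ ψ' = 1)
    (θ : (Fin (2 ^ S) × Fin a') × (Fin (2 ^ S) × Fin b' × Fin rr) → ℂ)
    (hθ : star θ ⬝ᵥ θ = 1)
    (u : Fin r → Fin (2 ^ S) × Fin a' → ℂ)
    (v : Fin r → Fin (2 ^ S) × Fin b' × Fin rr → ℂ)
    (hrank : θ = fun p => ∑ i, u i p.1 * v i p.2) :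
    ‖∑ p, (starRingEnd ℂ) (Φ (p.1.1, p.2.1) * ψ' (p.1.2, p.2.2)) * θ p‖ ^ 2
      ≤ (r : ℝ) / 2 ^ S := by
  rcases Nat.eq_zero_or_pos r with hr0 | hrpos
  · exfalso
    subst hr0
    subst hrank
    simp [dotProduct] at hθ
  haveI : NeZero r := ⟨hrpos.ne'⟩
  obtain ⟨e, horth, hspan⟩ := ortho_decomp u
  choose a ha using hspan
  set w : Fin r → Fin (2 ^ S) × Fin b' × Fin rr → ℂ := fun j q => ∑ i, a i j * v i q with hw
  have hθw : ∀ p : (Fin (2 ^ S) × Fin a') × (Fin (2 ^ S) × Fin b' × Fin rr),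
      θ p = ∑ j, e j p.1 * w j p.2 := by
    intro p
    rw [hrank]
    calc ∑ i, u i p.1 * v i p.2
        = ∑ i, (∑ j, a i j * e j p.1) * v i p.2 :=
          Finset.sum_congr rfl fun i _ => by rw [← ha i p.1]
      _ = ∑ i, ∑ j, a i j * e j p.1 * v i p.2 :=
          Finset.sum_congr rfl fun i _ => Finset.sum_mul _ _ _
      _ = ∑ j, ∑ i, a i j * e j p.1 * v i p.2 := Finset.sum_comm
      _ = ∑ j, e j p.1 * w j p.2 := by
          refine Finset.sum_congr rfl fun j _ => ?_
          rw [hw, Finset.mul_sum]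
          exact Finset.sum_congr rfl fun i _ => by ring
  -- the norm identity
  have hEW : ∑ j, (∑ p1, ‖e j p1‖ ^ 2) * (∑ q, ‖w j q‖ ^ 2) = 1 := by
    have hθ' := hθ
    simp only [dotProduct, Pi.star_apply, Complex.star_def] at hθ'
    have hexp : (∑ p, (starRingEnd ℂ) (θ p) * θ p)
        = ∑ j, ∑ k, (∑ p1, (starRingEnd ℂ) (e j p1) * e k p1)
            * (∑ q, (starRingEnd ℂ) (w j q) * w k q) := by
      calc (∑ p, (starRingEnd ℂ) (θ p) * θ p)
          = ∑ p : (Fin (2 ^ S) × Fin a') × (Fin (2 ^ S) × Fin b' × Fin rr), ∑ j, ∑ k,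
              ((starRingEnd ℂ) (e j p.1) * e k p.1) * ((starRingEnd ℂ) (w j p.2) * w k p.2) := by
            refine Finset.sum_congr rfl fun p _ => ?_
            rw [hθw p, map_sum, Finset.sum_mul_sum]
            refine Finset.sum_congr rfl fun j _ => Finset.sum_congr rfl fun k _ => ?_
            rw [_root_.map_mul]; ring
        _ = ∑ j, ∑ p : (Fin (2 ^ S) × Fin a') × (Fin (2 ^ S) × Fin b' × Fin rr), ∑ k,
              ((starRingEnd ℂ) (e j p.1) * e k p.1) * ((starRingEnd ℂ) (w j p.2) * w k p.2) :=
            Finset.sum_comm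
        _ = ∑ j, ∑ k, ∑ p : (Fin (2 ^ S) × Fin a') × (Fin (2 ^ S) × Fin b' × Fin rr),
              ((starRingEnd ℂ) (e j p.1) * e k p.1) * ((starRingEnd ℂ) (w j p.2) * w k p.2) :=
            Finset.sum_congr rfl fun j _ => Finset.sum_comm
        _ = ∑ j, ∑ k, (∑ p1, (starRingEnd ℂ) (e j p1) * e k p1)
              * (∑ q, (starRingEnd ℂ) (w j q) * w k q) :=
            Finset.sum_congr rfl fun j _ => Finset.sum_congr rfl fun k _ =>
              sum_prod_factor (fun p1 => (starRingEnd ℂ) (e j p1) * e k p1)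
                (fun q => (starRingEnd ℂ) (w j q) * w k q)
    rw [hexp] at hθ'
    have hdiag : ∀ j : Fin r, (∑ k, (∑ p1, (starRingEnd ℂ) (e j p1) * e k p1)
        * (∑ q, (starRingEnd ℂ) (w j q) * w k q))
        = ((((∑ p1, ‖e j p1‖ ^ 2) * (∑ q, ‖w j q‖ ^ 2) : ℝ)) : ℂ) := by
      intro j
      rw [Finset.sum_eq_single j]
      · have h1 : (∑ p1, (starRingEnd ℂ) (e j p1) * e j p1)
            = ((∑ p1, ‖e j p1‖ ^ 2 : ℝ) : ℂ) := by
          push_cast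
          exact Finset.sum_congr rfl fun p1 _ => by
            rw [conj_mul_self']; push_cast; ring
        have h2 : (∑ q, (starRingEnd ℂ) (w j q) * w j q)
            = ((∑ q, ‖w j q‖ ^ 2 : ℝ) : ℂ) := by
          push_cast
          exact Finset.sum_congr rfl fun q _ => by
            rw [conj_mul_self']; push_cast; ring
        rw [h1, h2]; push_cast; ring
      · intro k _ hkj
        rw [horth j k fun h => hkj h.symm, zero_mul]
      · intro h; exact absurd (Finset.mem_univ j) h
    rw [Finset.sum_congr rfl fun j _ => hdiag j] at hθ'
    have : ((∑ j, (∑ p1, ‖e j p1‖ ^ 2) * (∑ q, ‖w j q‖ ^ 2) : ℝ) : ℂ)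
        = 1 := by push_cast; rw [← hθ']; push_cast; ring
    exact_mod_cast this
  -- final chain
  have hψn : ∑ i, ‖ψ' i‖ ^ 2 = 1 := norm_one_of_dot ψ' hψ'
  have hphi : ∀ x y : Fin (2 ^ S), Φ (x, y)
      = if x = y then ((Real.sqrt (2 ^ S))⁻¹ : ℂ) else 0 := fun x y => by rw [hΦ]
  set T : Fin r → ℂ := fun j =>
    ∑ p : (Fin (2 ^ S) × Fin a') × (Fin (2 ^ S) × Fin b' × Fin rr),
      (starRingEnd ℂ) (Φ (p.1.1, p.2.1) * ψ' (p.1.2, p.2.2)) * (e j p.1 * w j p.2) with hT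
  have hL : (∑ p, (starRingEnd ℂ) (Φ (p.1.1, p.2.1) * ψ' (p.1.2, p.2.2)) * θ p)
      = ∑ j, T j := by
    calc (∑ p, (starRingEnd ℂ) (Φ (p.1.1, p.2.1) * ψ' (p.1.2, p.2.2)) * θ p)
        = ∑ p : (Fin (2 ^ S) × Fin a') × (Fin (2 ^ S) × Fin b' × Fin rr), ∑ j,
            (starRingEnd ℂ) (Φ (p.1.1, p.2.1) * ψ' (p.1.2, p.2.2)) * (e j p.1 * w j p.2) := by
          refine Finset.sum_congr rfl fun p _ => ?_
          rw [hθw p, Finset.mul_sum]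
      _ = ∑ j, T j := Finset.sum_comm
  have hTj : ∀ j, ‖T j‖ ^ 2
      ≤ (∑ p1, ‖e j p1‖ ^ 2) * (∑ q, ‖w j q‖ ^ 2) / 2 ^ S := by
    intro j
    have h2 := step2 ψ' hψn (e j) (w j)
    have hTeq : T j = ∑ p : (Fin (2 ^ S) × Fin a') × (Fin (2 ^ S) × Fin b' × Fin rr),
        (starRingEnd ℂ) ((if p.1.1 = p.2.1 then ((Real.sqrt (2 ^ S))⁻¹ : ℂ) else 0)
          * ψ' (p.1.2, p.2.2)) * (e j p.1 * w j p.2) := by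
      rw [hT]
      exact Finset.sum_congr rfl fun p _ => by rw [hphi]
    rw [hTeq]
    exact h2
  rw [hL]
  have habs : ‖∑ j, T j‖ ≤ ∑ j, ‖T j‖ := by
    exact norm_sum_le _ _
  calc ‖∑ j, T j‖ ^ 2
      ≤ (∑ j, ‖T j‖) ^ 2 := by
        apply pow_le_pow_left₀ (norm_nonneg _) habs
    _ ≤ (r : ℝ) * ∑ j, ‖T j‖ ^ 2 := by
        have := sq_sum_le_card_mul_sum_sq (s := (Finset.univ : Finset (Fin r)))
          (f := fun j => ‖T j‖)
        simpa using this
    _ ≤ (r : ℝ) * ∑ j, (∑ p1, ‖e j p1‖ ^ 2) * (∑ q, ‖w j q‖ ^ 2) / 2 ^ S := by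
        apply mul_le_mul_of_nonneg_left (Finset.sum_le_sum fun j _ => hTj j) (by positivity)
    _ = (r : ℝ) / 2 ^ S := by
        rw [← Finset.sum_div, hEW]
        ring
end

section
/- If |ψ⟩ is a pure state on AA'BB'R whose squared overlap with |Φ⟩_{AB} ⊗ |ψ'⟩_{A'B'R} is at least 1 − δ, where |Φ⟩ is the S-qubit maximally entangled state, then the Schmidt rank of |ψ⟩ across the cut AA' versus BB'R is at least (1 − δ)·2^S. -/
open Matrix

lemma cs_sum {ι : Type*} [Fintype ι] (f g : ι → ℂ) :
    ‖∑ i, f i * g i‖ ^ 2 ≤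
      (∑ i, ‖f i‖ ^ 2) * (∑ i, ‖g i‖ ^ 2) := by
  let F : EuclideanSpace ℂ ι := WithLp.toLp 2 (fun i => (starRingEnd ℂ) (f i))
  let G : EuclideanSpace ℂ ι := WithLp.toLp 2 g
  have h1 : (inner ℂ F G : ℂ) = ∑ i, f i * g i := by
    simp [inner, F, G, PiLp.inner_apply, RCLike.inner_apply]
    exact Finset.sum_congr rfl fun i _ => mul_comm _ _
  have h2 := norm_inner_le_norm (𝕜 := ℂ) F G
  rw [h1] at h2
  have hF : ‖F‖ ^ 2 = ∑ i, ‖f i‖ ^ 2 := by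
    rw [EuclideanSpace.norm_eq, Real.sq_sqrt (by positivity)]
    simp [F, Complex.norm_conj]
  have hG : ‖G‖ ^ 2 = ∑ i, ‖g i‖ ^ 2 := by
    rw [EuclideanSpace.norm_eq, Real.sq_sqrt (by positivity)]
  calc ‖∑ i, f i * g i‖ ^ 2 ≤ (‖F‖ * ‖G‖) ^ 2 :=
        pow_le_pow_left₀ (norm_nonneg _) h2 2
    _ = _ := by rw [mul_pow, hF, hG]

open Finset in
lemma sum_interchange {ι κ : Type*} [Fintype ι] [Fintype κ] {n : ℕ}
    (A : ι → κ → ℂ) (E : Fin n → ι → ℂ) (W : Fin n → κ → ℂ) :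
    ∑ p, ∑ q, A p q * (∑ k, E k p * W k q)
      = ∑ k, ∑ q, (∑ p, A p q * E k p) * W k q := by
  calc ∑ p, ∑ q, A p q * (∑ k, E k p * W k q)
      = ∑ p, ∑ q, ∑ k, A p q * E k p * W k q := by
        refine sum_congr rfl fun p _ => sum_congr rfl fun q _ => ?_
        rw [Finset.mul_sum]; exact sum_congr rfl fun k _ => by ring
    _ = ∑ p, ∑ k, ∑ q, A p q * E k p * W k q := by
        exact sum_congr rfl fun p _ => Finset.sum_comm
    _ = ∑ k, ∑ p, ∑ q, A p q * E k p * W k q := Finset.sum_comm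
    _ = ∑ k, ∑ q, ∑ p, A p q * E k p * W k q := sum_congr rfl fun k _ => Finset.sum_comm
    _ = ∑ k, ∑ q, (∑ p, A p q * E k p) * W k q := by
        exact sum_congr rfl fun k _ => sum_congr rfl fun q _ => (Finset.sum_mul _ _ _).symm

open Finset in
lemma sum_factor {ι κ : Type*} [Fintype ι] [Fintype κ] {n : ℕ}
    (E : Fin n → ι → ℂ) (W : Fin n → κ → ℂ)
    (hE : ∀ k k', ∑ p, (starRingEnd ℂ) (E k p) * E k' p = if k = k' then 1 else 0) :
    ∑ p : ι, ∑ q : κ, (starRingEnd ℂ) (∑ k, E k p * W k q) * (∑ k, E k p * W k q)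
      = ∑ k, ∑ q, (starRingEnd ℂ) (W k q) * W k q := by
  calc ∑ p : ι, ∑ q : κ, (starRingEnd ℂ) (∑ k, E k p * W k q) * (∑ k, E k p * W k q)
      = ∑ p, ∑ q, ∑ k, ∑ k', ((starRingEnd ℂ) (E k p) * E k' p) *
          ((starRingEnd ℂ) (W k q) * W k' q) := by
        refine sum_congr rfl fun p _ => sum_congr rfl fun q _ => ?_
        rw [map_sum, Finset.sum_mul_sum]
        refine sum_congr rfl fun k _ => sum_congr rfl fun k' _ => ?_
        simp only [_root_.map_mul]; ring
    _ = ∑ k, ∑ k', ∑ p, ∑ q, ((starRingEnd ℂ) (E k p) * E k' p) *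
          ((starRingEnd ℂ) (W k q) * W k' q) := by
        calc ∑ p, ∑ q, ∑ k, ∑ k', ((starRingEnd ℂ) (E k p) * E k' p) *
              ((starRingEnd ℂ) (W k q) * W k' q)
            = ∑ p, ∑ k, ∑ q, ∑ k', ((starRingEnd ℂ) (E k p) * E k' p) *
              ((starRingEnd ℂ) (W k q) * W k' q) :=
              sum_congr rfl fun p _ => Finset.sum_comm
          _ = ∑ p, ∑ k, ∑ k', ∑ q, ((starRingEnd ℂ) (E k p) * E k' p) *
              ((starRingEnd ℂ) (W k q) * W k' q) :=
              sum_congr rfl fun p _ => sum_congr rfl fun k _ => Finset.sum_comm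
          _ = ∑ k, ∑ p, ∑ k', ∑ q, ((starRingEnd ℂ) (E k p) * E k' p) *
              ((starRingEnd ℂ) (W k q) * W k' q) := Finset.sum_comm
          _ = ∑ k, ∑ k', ∑ p, ∑ q, ((starRingEnd ℂ) (E k p) * E k' p) *
              ((starRingEnd ℂ) (W k q) * W k' q) :=
              sum_congr rfl fun k _ => Finset.sum_comm
    _ = ∑ k, ∑ k', (∑ p, (starRingEnd ℂ) (E k p) * E k' p) *
          (∑ q, (starRingEnd ℂ) (W k q) * W k' q) := by
        refine sum_congr rfl fun k _ => sum_congr rfl fun k' _ => ?_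
        rw [Finset.sum_mul_sum]
    _ = ∑ k, ∑ q, (starRingEnd ℂ) (W k q) * W k q := by
        refine sum_congr rfl fun k _ => ?_
        simp [hE, ite_mul]

lemma conj_mul_self_sum {ι : Type*} [Fintype ι] {f : ι → ℂ}
    (h : ∑ i, (starRingEnd ℂ) (f i) * f i = 1) :
    ∑ i, ‖f i‖ ^ 2 = 1 := by
  have : ((∑ i, ‖f i‖ ^ 2 : ℝ) : ℂ) = ((1:ℝ) : ℂ) := by
    push_cast
    rw [← h]
    refine Finset.sum_congr rfl fun i _ => ?_
    rw [mul_comm, Complex.mul_conj, ← Complex.sq_norm]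
    push_cast
    ring
  exact_mod_cast this

lemma exists_on_decomp {ι : Type*} [Fintype ι] {r : ℕ} (u : Fin r → ι → ℂ) :
    ∃ (n : ℕ), n ≤ r ∧ ∃ (e : Fin n → ι → ℂ) (c : Fin r → Fin n → ℂ),
      (∀ k k', ∑ p, (starRingEnd ℂ) (e k p) * e k' p = if k = k' then 1 else 0) ∧
      (∀ i p, u i p = ∑ k, c i k * e k p) := by
  classical
  let H := EuclideanSpace ℂ ι
  let u' : Fin r → H := fun i => WithLp.toLp 2 (u i)
  let U : Submodule ℂ H := Submodule.span ℂ (Set.range u')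
  refine ⟨Module.finrank ℂ U, ?_, ?_⟩
  · refine (finrank_span_le_card _).trans ?_
    rw [Set.toFinset_card]
    exact (Fintype.card_range_le u').trans (by simp)
  · let b := stdOrthonormalBasis ℂ U
    have hmem : ∀ i, u' i ∈ U := fun i => Submodule.subset_span (Set.mem_range_self i)
    refine ⟨fun k => (b k : H), fun i k => b.repr ⟨u' i, hmem i⟩ k, ?_, ?_⟩
    · intro k k'
      have h1 := b.orthonormal
      rw [orthonormal_iff_ite] at h1
      have h2 := h1 k k'
      rw [Submodule.coe_inner, PiLp.inner_apply] at h2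
      simpa [PiLp.inner_apply, RCLike.inner_apply, mul_comm] using h2
    · intro i p
      have h1 := b.sum_repr ⟨u' i, hmem i⟩
      have h2 : (u' i : H) = ∑ k, b.repr ⟨u' i, hmem i⟩ k • (b k : H) := by
        have h4 := congrArg (Subtype.val) h1
        simp only [Submodule.coe_sum, Submodule.coe_smul] at h4
        exact h4.symm
      let ev : H →ₗ[ℂ] ℂ :=
        { toFun := fun x => x p, map_add' := fun _ _ => rfl, map_smul' := fun _ _ => rfl }
      have h3 := congrArg ev h2
      rw [map_sum] at h3
      simp only [map_smul, smul_eq_mul] at h3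
      exact h3

/-- If a unit vector `|ψ⟩` on `AA'BB'R` has squared overlap at least `1 − δ` with
`|Φ⟩_{AB} ⊗ |ψ'⟩_{A'B'R}`, where `|Φ⟩` is the `S`-qubit maximally entangled state, then the
Schmidt rank of `|ψ⟩` across the cut `AA'` vs `BB'R` is at least `(1 − δ)·2^S`: any
decomposition of `ψ` into `r` product terms across that cut must have `r ≥ (1 − δ)·2^S`. -/
theorem stmt5 {S a' b' rr : ℕ} (δ : ℝ)
    (Φ : Fin (2 ^ S) × Fin (2 ^ S) → ℂ)
    (hΦ : Φ = fun p => if p.1 = p.2 then ((Real.sqrt (2 ^ S))⁻¹ : ℂ) else 0)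
    (ψ' : Fin a' × Fin b' × Fin rr → ℂ) (hψ' : star ψ' ⬝ᵥ ψ' = 1)
    (ψ : (Fin (2 ^ S) × Fin a') × (Fin (2 ^ S) × Fin b' × Fin rr) → ℂ)
    (hψ : star ψ ⬝ᵥ ψ = 1)
    (hoverlap : 1 - δ ≤
      ‖∑ p, (starRingEnd ℂ) (Φ (p.1.1, p.2.1) * ψ' (p.1.2, p.2.2)) * ψ p‖ ^ 2) :
    ∀ (r : ℕ) (u : Fin r → Fin (2 ^ S) × Fin a' → ℂ)
      (v : Fin r → Fin (2 ^ S) × Fin b' × Fin rr → ℂ),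
      ψ = (fun p => ∑ i, u i p.1 * v i p.2) → (1 - δ) * 2 ^ S ≤ (r : ℝ) := by
  intro r u v hdecomp
  classical
  set O : ℂ := ∑ p, (starRingEnd ℂ) (Φ (p.1.1, p.2.1) * ψ' (p.1.2, p.2.2)) * ψ p with hOdef
  -- orthonormalization of the u-side
  obtain ⟨n, hn, e, c, he, hu⟩ := exists_on_decomp u
  -- the induced decomposition with orthonormal left factors
  let w : Fin n → Fin (2 ^ S) × Fin b' × Fin rr → ℂ := fun k q => ∑ i, c i k * v i q
  have hψw : ∀ p, ψ p = ∑ k, e k p.1 * w k p.2 := by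
    intro p
    rw [hdecomp]
    simp only
    calc ∑ i, u i p.1 * v i p.2 = ∑ i, ∑ k, e k p.1 * (c i k * v i p.2) := by
          refine Finset.sum_congr rfl fun i _ => ?_
          rw [hu i, Finset.sum_mul]
          exact Finset.sum_congr rfl fun k _ => by ring
      _ = ∑ k, ∑ i, e k p.1 * (c i k * v i p.2) := Finset.sum_comm
      _ = ∑ k, e k p.1 * w k p.2 := by
          refine Finset.sum_congr rfl fun k _ => ?_
          rw [Finset.mul_sum]
  -- norm of w
  have hwC : ∑ k, ∑ q, (starRingEnd ℂ) (w k q) * w k q = 1 := by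
    calc ∑ k, ∑ q, (starRingEnd ℂ) (w k q) * w k q
        = ∑ p1, ∑ q, (starRingEnd ℂ) (∑ k, e k p1 * w k q) * (∑ k, e k p1 * w k q) :=
          (sum_factor e w he).symm
      _ = ∑ p1, ∑ q, (starRingEnd ℂ) (ψ (p1, q)) * ψ (p1, q) := by
          refine Finset.sum_congr rfl fun p1 _ => Finset.sum_congr rfl fun q _ => ?_
          rw [hψw (p1, q)]
      _ = ∑ p, (starRingEnd ℂ) (ψ p) * ψ p :=
          (Fintype.sum_prod_type (fun p => (starRingEnd ℂ) (ψ p) * ψ p)).symm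
      _ = star ψ ⬝ᵥ ψ := by simp [dotProduct]
      _ = 1 := hψ
  -- overlap decomposition
  set α : Fin n → Fin (2 ^ S) × Fin b' × Fin rr → ℂ := fun k q =>
    ∑ p1, (starRingEnd ℂ) (Φ (p1.1, q.1) * ψ' (p1.2, q.2)) * e k p1 with hα_def
  have hO : O = ∑ k, ∑ q, α k q * w k q := by
    calc O = ∑ p1, ∑ q, (starRingEnd ℂ) (Φ (p1.1, q.1) * ψ' (p1.2, q.2)) * ψ (p1, q) :=
          Fintype.sum_prod_type (fun p => (starRingEnd ℂ) (Φ (p.1.1, p.2.1) * ψ' (p.1.2, p.2.2)) * ψ p)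
      _ = ∑ p1, ∑ q, (starRingEnd ℂ) (Φ (p1.1, q.1) * ψ' (p1.2, q.2)) *
            (∑ k, e k p1 * w k q) := by
          refine Finset.sum_congr rfl fun p1 _ => Finset.sum_congr rfl fun q _ => ?_
          rw [hψw (p1, q)]
      _ = ∑ k, ∑ q, (∑ p1, (starRingEnd ℂ) (Φ (p1.1, q.1) * ψ' (p1.2, q.2)) * e k p1) * w k q :=
          by apply sum_interchange
      _ = ∑ k, ∑ q, α k q * w k q := by rw [hα_def]
  -- bound on α
  have hsq : Real.sqrt (2 ^ S) ^ 2 = 2 ^ S := Real.sq_sqrt (by positivity)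
  have hα : ∀ k q, α k q = ((Real.sqrt (2 ^ S) : ℝ) : ℂ)⁻¹ *
      ∑ a2, (starRingEnd ℂ) (ψ' (a2, q.2)) * e k (q.1, a2) := by
    intro k q
    calc α k q = ∑ a, ∑ a2, (if a = q.1 then
          ((Real.sqrt (2 ^ S) : ℝ) : ℂ)⁻¹ * ((starRingEnd ℂ) (ψ' (a2, q.2)) * e k (a, a2))
          else 0) := by
          simp only [hα_def]
          rw [Fintype.sum_prod_type (fun p1 : Fin (2 ^ S) × Fin a' =>
            (starRingEnd ℂ) (Φ (p1.1, q.1) * ψ' (p1.2, q.2)) * e k p1)]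
          refine Finset.sum_congr rfl fun a _ => Finset.sum_congr rfl fun a2 _ => ?_
          rw [hΦ]
          by_cases h : a = q.1 <;>
            simp [h, _root_.map_mul, map_inv₀, Complex.conj_ofReal] <;> ring
      _ = ∑ a2, ∑ a, (if a = q.1 then
          ((Real.sqrt (2 ^ S) : ℝ) : ℂ)⁻¹ * ((starRingEnd ℂ) (ψ' (a2, q.2)) * e k (a, a2))
          else 0) := Finset.sum_comm
      _ = ∑ a2, ((Real.sqrt (2 ^ S) : ℝ) : ℂ)⁻¹ *
            ((starRingEnd ℂ) (ψ' (a2, q.2)) * e k (q.1, a2)) := by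
          refine Finset.sum_congr rfl fun a2 _ => ?_
          rw [Finset.sum_ite_eq' Finset.univ q.1
            (fun a => ((Real.sqrt (2 ^ S) : ℝ) : ℂ)⁻¹ *
              ((starRingEnd ℂ) (ψ' (a2, q.2)) * e k (a, a2)))]
          simp
      _ = _ := by rw [Finset.mul_sum]
  have hψ'R : ∑ q2 : Fin b' × Fin rr, ∑ a2, ‖ψ' (a2, q2)‖ ^ 2 = 1 := by
    have h1 : ∑ x : Fin a' × (Fin b' × Fin rr), ‖ψ' x‖ ^ 2 = 1 := by
      apply conj_mul_self_sum
      rw [← hψ']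
      simp [dotProduct]
    calc ∑ q2 : Fin b' × Fin rr, ∑ a2, ‖ψ' (a2, q2)‖ ^ 2
        = ∑ a2, ∑ q2 : Fin b' × Fin rr, ‖ψ' (a2, q2)‖ ^ 2 := Finset.sum_comm
      _ = ∑ x : Fin a' × (Fin b' × Fin rr), ‖ψ' x‖ ^ 2 :=
          (Fintype.sum_prod_type (fun x : Fin a' × (Fin b' × Fin rr) =>
            ‖ψ' x‖ ^ 2)).symm
      _ = 1 := h1
  have heR : ∀ k, ∑ p : Fin (2 ^ S) × Fin a', ‖e k p‖ ^ 2 = 1 := by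
    intro k
    apply conj_mul_self_sum
    simpa using he k k
  have hαb : ∀ k, ∑ q, ‖α k q‖ ^ 2 ≤ ((2 : ℝ) ^ S)⁻¹ := by
    intro k
    have hstep : ∀ q : Fin (2 ^ S) × Fin b' × Fin rr, ‖α k q‖ ^ 2 ≤
        ((2 : ℝ) ^ S)⁻¹ * ((∑ a2, ‖ψ' (a2, q.2)‖ ^ 2) *
          (∑ a2, ‖e k (q.1, a2)‖ ^ 2)) := by
      intro q
      rw [hα k q, norm_mul]
      rw [mul_pow]
      have h1 : ‖((Real.sqrt (2 ^ S) : ℝ) : ℂ)⁻¹‖ ^ 2 = ((2 : ℝ) ^ S)⁻¹ := by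
        rw [norm_inv, Complex.norm_real, Real.norm_eq_abs, abs_of_nonneg (Real.sqrt_nonneg _),
          inv_pow, hsq]
      rw [h1]
      have h2 := cs_sum (fun a2 => (starRingEnd ℂ) (ψ' (a2, q.2))) (fun a2 => e k (q.1, a2))
      simp only [Complex.norm_conj] at h2
      exact mul_le_mul_of_nonneg_left h2 (by positivity)
    calc ∑ q, ‖α k q‖ ^ 2
        ≤ ∑ q : Fin (2 ^ S) × Fin b' × Fin rr, ((2 : ℝ) ^ S)⁻¹ *
            ((∑ a2, ‖ψ' (a2, q.2)‖ ^ 2) *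
             (∑ a2, ‖e k (q.1, a2)‖ ^ 2)) := Finset.sum_le_sum fun q _ => hstep q
      _ = ((2 : ℝ) ^ S)⁻¹ * ∑ q1, ∑ q2 : Fin b' × Fin rr,
            ((∑ a2, ‖ψ' (a2, q2)‖ ^ 2) *
             (∑ a2, ‖e k (q1, a2)‖ ^ 2)) := by
          rw [← Finset.mul_sum, Fintype.sum_prod_type]
      _ = ((2 : ℝ) ^ S)⁻¹ * ∑ q1, ((∑ q2 : Fin b' × Fin rr, ∑ a2, ‖ψ' (a2, q2)‖ ^ 2) *
            (∑ a2, ‖e k (q1, a2)‖ ^ 2)) := by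
          congr 1
          refine Finset.sum_congr rfl fun q1 _ => ?_
          rw [Finset.sum_mul]
      _ = ((2 : ℝ) ^ S)⁻¹ := by
          rw [hψ'R]
          simp only [one_mul]
          have h2 : ∑ q1, ∑ a2, ‖e k (q1, a2)‖ ^ 2
              = ∑ p : Fin (2 ^ S) × Fin a', ‖e k p‖ ^ 2 :=
            (Fintype.sum_prod_type (fun p : Fin (2 ^ S) × Fin a' =>
              ‖e k p‖ ^ 2)).symm
          rw [h2, heR k, mul_one]
  -- Cauchy–Schwarz on the overlap
  have hwR : ∑ kq : Fin n × (Fin (2 ^ S) × Fin b' × Fin rr), ‖w kq.1 kq.2‖ ^ 2 = 1 := by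
    apply conj_mul_self_sum
    rw [Fintype.sum_prod_type]
    exact hwC
  have hOb : ‖O‖ ^ 2 ≤ (n : ℝ) * ((2 : ℝ) ^ S)⁻¹ := by
    rw [hO, show (∑ k, ∑ q, α k q * w k q) =
      ∑ kq : Fin n × (Fin (2 ^ S) × Fin b' × Fin rr), α kq.1 kq.2 * w kq.1 kq.2 from
      (Fintype.sum_prod_type (fun kq : Fin n × (Fin (2 ^ S) × Fin b' × Fin rr) =>
        α kq.1 kq.2 * w kq.1 kq.2)).symm]
    refine le_trans (cs_sum _ _) ?_
    rw [hwR, mul_one, Fintype.sum_prod_type]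
    calc ∑ k, ∑ q, ‖α k q‖ ^ 2 ≤ ∑ _k : Fin n, ((2 : ℝ) ^ S)⁻¹ :=
          Finset.sum_le_sum fun k _ => hαb k
      _ = (n : ℝ) * ((2 : ℝ) ^ S)⁻¹ := by simp [mul_comm]
  -- conclude
  have h2S : (0 : ℝ) < 2 ^ S := by positivity
  have hfin : 1 - δ ≤ (r : ℝ) * ((2 : ℝ) ^ S)⁻¹ := by
    refine le_trans hoverlap (le_trans hOb ?_)
    exact mul_le_mul_of_nonneg_right (by exact_mod_cast hn) (by positivity)
  calc (1 - δ) * 2 ^ S ≤ ((r : ℝ) * ((2 : ℝ) ^ S)⁻¹) * 2 ^ S :=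
        mul_le_mul_of_nonneg_right hfin h2S.le
    _ = (r : ℝ) := by field_simp
end
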